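/- Let σ be a special D-partition of 2N admitting a non-special degeneration at position j with data (r, m) (i.e., σ_{2j} = 2r+1, σ_{2j+1} = … = σ_{2j+2m} = 2r, σ_{2j+2m+1} = 2r−1), and let σ' be the partition obtained by replacing the parts σ_{2j} = 2r+1 and σ_{2j+2m+1} = 2r−1 both by 2r. Then σ' is a D-partition of 2N, σ' is not special, and d(σ') = d(σ), where d(λ) := D(λ^T) is the Spaltenstein dual; in other words, σ' lies in the same special piece as σ. -/

import Mathlib

/-- `p : ℕ → ℕ` represents a partition of `n`: `p i` is the `i`-th part (1-indexed),
non-increasing, with `p 0 = 0` and `p i = 0` for `i` beyond the number of parts. -/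
def IsPartitionFn (n : ℕ) (p : ℕ → ℕ) : Prop :=
  p 0 = 0 ∧ (∀ i j, 1 ≤ i → i ≤ j → p j ≤ p i) ∧ (∀ i, n < i → p i = 0) ∧
    ∑ i ∈ Finset.Icc 1 n, p i = n

/-- The multiplicity of `k` as a part of `p`. -/
noncomputable def partMult (p : ℕ → ℕ) (k : ℕ) : ℕ :=
  {i : ℕ | 1 ≤ i ∧ p i = k}.ncard

/-- The transpose (conjugate) partition: `(p^T)_k = #{i ≥ 1 : p_i ≥ k}`. -/
noncomputable def transposeFn (p : ℕ → ℕ) : ℕ → ℕ :=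
  fun k => {i : ℕ | 1 ≤ i ∧ k ≤ p i}.ncard

/-- A D-partition of `n`: every even part occurs with even multiplicity. -/
def IsDPartition (n : ℕ) (p : ℕ → ℕ) : Prop :=
  IsPartitionFn n p ∧ ∀ k, Even k → Even (partMult p k)

/-- A special D-partition: a D-partition whose transpose is a C-partition
(every odd part occurs with even multiplicity). -/
def IsSpecialDPartition (n : ℕ) (p : ℕ → ℕ) : Prop :=
  IsDPartition n p ∧ ∀ k, Odd k → Even (partMult (transposeFn p) k)
/-- `lam` dominates `mu` (componentwise partial sums). -/
def DominatesFn (lam mu : ℕ → ℕ) : Prop :=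
  ∀ m, ∑ i ∈ Finset.Icc 1 m, mu i ≤ ∑ i ∈ Finset.Icc 1 m, lam i

/-- `mu` is the D-collapse of `lam`: the greatest (in dominance order)
D-partition of `n` dominated by `lam`. -/
def IsDCollapseOf (n : ℕ) (lam mu : ℕ → ℕ) : Prop :=
  IsDPartition n mu ∧ DominatesFn lam mu ∧
    ∀ nu, IsDPartition n nu → DominatesFn lam nu → DominatesFn mu nu

open Classical in
/-- The D-collapse of `lam`, as a function. -/
noncomputable def Dcollapse (n : ℕ) (lam : ℕ → ℕ) : ℕ → ℕ :=
  if h : ∃ mu, IsDCollapseOf n lam mu then h.choose else fun _ => 0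

/-- The Spaltenstein dual `d(p) = D(pᵀ)`. -/
noncomputable def spaltDual (n : ℕ) (p : ℕ → ℕ) : ℕ → ℕ :=
  Dcollapse n (transposeFn p)

/-- A marked pair of `p`: an index `j ≥ 1` such that `p (2j)` and `p (2j+1)` are
both odd and `p (2j) > p (2j+1)`. -/
def markedSet (p : ℕ → ℕ) : Set ℕ :=
  {j : ℕ | 1 ≤ j ∧ Odd (p (2 * j)) ∧ Odd (p (2 * j + 1)) ∧ p (2 * j + 1) < p (2 * j)}

/-- The set of positions at which a non-special degeneration of `σ` occurs:
`σ (2j) = 2r+1`, `σ (2j+1) = ⋯ = σ (2j+2m) = 2r`, `σ (2j+2m+1) = 2r-1`. -/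
def nsdSet (σ : ℕ → ℕ) : Set ℕ :=
  {j : ℕ | 1 ≤ j ∧ ∃ r m : ℕ, 1 ≤ r ∧ σ (2 * j) = 2 * r + 1 ∧
    (∀ i, 2 * j + 1 ≤ i → i ≤ 2 * j + 2 * m → σ i = 2 * r) ∧
    σ (2 * j + 2 * m + 1) = 2 * r - 1}


section Aux

variable {n : ℕ} {p : ℕ → ℕ}

lemma part_le_n (hp : IsPartitionFn n p) (i : ℕ) : p i ≤ n := by
  obtain ⟨h0, hmono, hvan, hsum⟩ := hp
  rcases Nat.lt_or_ge n i with h | h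
  · rw [hvan i h]; exact Nat.zero_le _
  · rcases Nat.eq_zero_or_pos i with rfl | hi
    · rw [h0]; exact Nat.zero_le _
    · calc p i ≤ ∑ i' ∈ Finset.Icc 1 n, p i' :=
          Finset.single_le_sum (fun _ _ => Nat.zero_le _) (Finset.mem_Icc.mpr ⟨hi, h⟩)
        _ = n := hsum

lemma index_le_n (hp : IsPartitionFn n p) {i : ℕ} (h : 1 ≤ p i) : i ≤ n := by
  by_contra hc
  rw [hp.2.2.1 i (by omega)] at h
  omega

lemma ncard_Icc_one (M : ℕ) : (Set.Icc 1 M).ncard = M := by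
  rw [← Finset.coe_Icc, Set.ncard_coe_finset, Nat.card_Icc]; omega

lemma tset_finite (hp : IsPartitionFn n p) {k : ℕ} (hk : 1 ≤ k) :
    {i : ℕ | 1 ≤ i ∧ k ≤ p i}.Finite :=
  Set.Finite.subset (Set.finite_Icc 1 n)
    (fun x hx => ⟨hx.1, index_le_n hp (le_trans hk hx.2)⟩)

lemma transpose_eq_of (hp : IsPartitionFn n p) {k M : ℕ} (_hk : 1 ≤ k)
    (hfwd : ∀ i, 1 ≤ i → i ≤ M → k ≤ p i) (hbwd : p (M + 1) < k) :
    transposeFn p k = M := by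
  have hset : {i : ℕ | 1 ≤ i ∧ k ≤ p i} = Set.Icc 1 M := by
    ext i
    simp only [Set.mem_setOf_eq, Set.mem_Icc]
    constructor
    · rintro ⟨hi1, hi2⟩
      refine ⟨hi1, ?_⟩
      by_contra hiM
      have := hp.2.1 (M + 1) i (by omega) (by omega)
      omega
    · rintro ⟨hi1, hi2⟩
      exact ⟨hi1, hfwd i hi1 hi2⟩
  unfold transposeFn
  rw [hset, ncard_Icc_one]

lemma downward_eq_Icc {S : Set ℕ} (hfin : S.Finite) (h0 : 0 ∉ S)
    (hdc : ∀ a b, 1 ≤ a → a ≤ b → b ∈ S → a ∈ S) :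
    S = Set.Icc 1 S.ncard := by
  rcases S.eq_empty_or_nonempty with rfl | hne
  · simp
  · have hne' : hfin.toFinset.Nonempty := by
      rwa [Set.Finite.toFinset_nonempty]
    set M := hfin.toFinset.max' hne' with hM
    have hMS : M ∈ S := by
      have := hfin.toFinset.max'_mem hne'
      rwa [Set.Finite.mem_toFinset] at this
    have hS : S = Set.Icc 1 M := by
      ext a
      simp only [Set.mem_Icc]
      constructor
      · intro ha
        refine ⟨?_, hfin.toFinset.le_max' a (by rwa [Set.Finite.mem_toFinset])⟩
        rcases Nat.eq_zero_or_pos a with rfl | h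
        · exact absurd ha h0
        · exact h
      · rintro ⟨ha1, ha2⟩
        exact hdc a M ha1 ha2 hMS
    rw [hS, ncard_Icc_one]

lemma le_transpose_iff (hp : IsPartitionFn n p) {k i : ℕ} (hk : 1 ≤ k) (hi : 1 ≤ i) :
    i ≤ transposeFn p k ↔ k ≤ p i := by
  have hset := downward_eq_Icc (tset_finite hp hk) (by simp)
    (fun a b ha hab hb => ⟨ha, le_trans hb.2 (hp.2.1 a b ha hab)⟩)
  have h := Set.ext_iff.mp hset i
  simp only [Set.mem_setOf_eq, Set.mem_Icc] at h
  unfold transposeFn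
  constructor
  · intro hle
    exact (h.mpr ⟨hi, hle⟩).2
  · intro hle
    exact (h.mp ⟨hi, hle⟩).2

end Aux

section Aux2

variable {n : ℕ} {p : ℕ → ℕ}

lemma transpose_eq_filter_card (hp : IsPartitionFn n p) {k : ℕ} (hk : 1 ≤ k) :
    transposeFn p k = ((Finset.Icc 1 n).filter (fun i => k ≤ p i)).card := by
  unfold transposeFn
  rw [show {i : ℕ | 1 ≤ i ∧ k ≤ p i}
      = (((Finset.Icc 1 n).filter (fun i => k ≤ p i) : Finset ℕ) : Set ℕ) from ?_]
  · rw [Set.ncard_coe_finset]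
  · ext i
    simp only [Set.mem_setOf_eq, Finset.coe_filter, Finset.mem_Icc]
    constructor
    · rintro ⟨hi1, hi2⟩
      exact ⟨⟨hi1, index_le_n hp (le_trans hk hi2)⟩, hi2⟩
    · tauto

lemma filter_le_Icc_card (M x : ℕ) :
    ((Finset.Icc 1 M).filter (fun k => k ≤ x)).card = min x M := by
  have h : (Finset.Icc 1 M).filter (fun k => k ≤ x) = Finset.Icc 1 (min x M) := by
    ext k
    simp only [Finset.mem_filter, Finset.mem_Icc]
    omega
  rw [h, Nat.card_Icc]
  omega

lemma transpose_is_partition (hp : IsPartitionFn n p) : IsPartitionFn n (transposeFn p) := by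
  refine ⟨?_, ?_, ?_, ?_⟩
  · have : {i : ℕ | 1 ≤ i ∧ 0 ≤ p i} = Set.Ici 1 := by
      ext i; simp
    unfold transposeFn
    rw [this]
    exact Set.Infinite.ncard (Set.Ici_infinite 1)
  · intro k k' hk hkk'
    exact Set.ncard_le_ncard
      (fun i hi => ⟨hi.1, le_trans hkk' hi.2⟩)
      (tset_finite hp hk)
  · intro k hk
    have : {i : ℕ | 1 ≤ i ∧ k ≤ p i} = ∅ := by
      ext i
      simp only [Set.mem_setOf_eq, Set.mem_empty_iff_false, iff_false, not_and, not_le]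
      intro _
      exact lt_of_le_of_lt (part_le_n ⟨hp.1, hp.2⟩ i) hk
    unfold transposeFn
    rw [this]
    simp
  · have hstep : ∀ k ∈ Finset.Icc 1 n, transposeFn p k
        = ∑ i ∈ Finset.Icc 1 n, (if k ≤ p i then 1 else 0) := by
      intro k hk
      rw [transpose_eq_filter_card hp (Finset.mem_Icc.mp hk).1, Finset.card_filter]
    rw [Finset.sum_congr rfl hstep, Finset.sum_comm]
    have hinner : ∀ i ∈ Finset.Icc 1 n, ∑ k ∈ Finset.Icc 1 n, (if k ≤ p i then 1 else 0) = p i := by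
      intro i _
      rw [← Finset.card_filter, filter_le_Icc_card]
      have := part_le_n hp i
      omega
    rw [Finset.sum_congr rfl hinner, hp.2.2.2]

lemma partial_sum_eq (hp : IsPartitionFn n p) {M : ℕ} (_hM : M ≤ n) :
    ∑ i ∈ Finset.Icc 1 M, p i = ∑ c ∈ Finset.Icc 1 n, min (transposeFn p c) M := by
  have hstep : ∀ i ∈ Finset.Icc 1 M, p i
      = ∑ c ∈ Finset.Icc 1 n, (if c ≤ p i then 1 else 0) := by
    intro i _
    rw [← Finset.card_filter, filter_le_Icc_card]
    have := part_le_n hp i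
    omega
  rw [Finset.sum_congr rfl hstep, Finset.sum_comm]
  refine Finset.sum_congr rfl ?_
  intro c hc
  rw [← Finset.card_filter]
  have hc1 : 1 ≤ c := (Finset.mem_Icc.mp hc).1
  have h : (Finset.Icc 1 M).filter (fun i => c ≤ p i) = Finset.Icc 1 (min (transposeFn p c) M) := by
    ext i
    simp only [Finset.mem_filter, Finset.mem_Icc]
    constructor
    · rintro ⟨⟨hi1, hi2⟩, hi3⟩
      exact ⟨hi1, by rw [le_min_iff]; exact ⟨(le_transpose_iff hp hc1 hi1).mpr hi3, hi2⟩⟩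
    · rintro ⟨hi1, hi2⟩
      rw [le_min_iff] at hi2
      exact ⟨⟨hi1, hi2.2⟩, (le_transpose_iff hp hc1 hi1).mp hi2.1⟩
  rw [h, Nat.card_Icc]
  omega

lemma transpose_transpose (hp : IsPartitionFn n p) {i : ℕ} (hi : 1 ≤ i) :
    transposeFn (transposeFn p) i = p i := by
  have hset : {k : ℕ | 1 ≤ k ∧ i ≤ transposeFn p k} = Set.Icc 1 (p i) := by
    ext k
    simp only [Set.mem_setOf_eq, Set.mem_Icc]
    constructor
    · rintro ⟨hk1, hk2⟩
      exact ⟨hk1, (le_transpose_iff hp hk1 hi).mp hk2⟩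
    · rintro ⟨hk1, hk2⟩
      exact ⟨hk1, (le_transpose_iff hp hk1 hi).mpr hk2⟩
  show {k : ℕ | 1 ≤ k ∧ i ≤ transposeFn p k}.ncard = p i
  rw [hset, ncard_Icc_one]

lemma partMult_add (hp : IsPartitionFn n p) {k : ℕ} (hk : 1 ≤ k) :
    partMult p k + transposeFn p (k + 1) = transposeFn p k := by
  have hmono : transposeFn p (k + 1) ≤ transposeFn p k :=
    Set.ncard_le_ncard (fun i hi => ⟨hi.1, le_trans (Nat.le_succ k) hi.2⟩) (tset_finite hp hk)
  have hset : {i : ℕ | 1 ≤ i ∧ p i = k}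
      = Set.Ioc (transposeFn p (k + 1)) (transposeFn p k) := by
    ext i
    simp only [Set.mem_setOf_eq, Set.mem_Ioc]
    constructor
    · rintro ⟨hi1, hi2⟩
      refine ⟨?_, (le_transpose_iff hp hk hi1).mpr (le_of_eq hi2.symm)⟩
      by_contra hle
      push_neg at hle
      have := (le_transpose_iff hp (by omega : 1 ≤ k + 1) hi1).mp hle
      omega
    · rintro ⟨hi1, hi2⟩
      have hi0 : 1 ≤ i := by omega
      have h1 : k ≤ p i := (le_transpose_iff hp hk hi0).mp hi2
      have h2 : ¬ (k + 1 ≤ p i) := by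
        intro hc
        exact absurd ((le_transpose_iff hp (by omega : 1 ≤ k + 1) hi0).mpr hc) (by omega)
      exact ⟨hi0, by omega⟩
  unfold partMult
  rw [hset, ← Finset.coe_Ioc, Set.ncard_coe_finset, Nat.card_Ioc]
  omega

end Aux2

section Aux3

variable {n : ℕ} {p : ℕ → ℕ}

lemma partMult_eq_card (hp : IsPartitionFn n p) {k : ℕ} (hk : 1 ≤ k) :
    partMult p k = ((Finset.Icc 1 n).filter (fun i => p i = k)).card := by
  unfold partMult
  rw [show {i : ℕ | 1 ≤ i ∧ p i = k}
      = (((Finset.Icc 1 n).filter (fun i => p i = k) : Finset ℕ) : Set ℕ) from ?_]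
  · rw [Set.ncard_coe_finset]
  · ext i
    simp only [Set.mem_setOf_eq, Finset.coe_filter, Finset.mem_Icc]
    constructor
    · rintro ⟨hi1, hi2⟩
      exact ⟨⟨hi1, index_le_n hp (by omega)⟩, hi2⟩
    · tauto

lemma partMult_zero (hp : IsPartitionFn n p) : partMult p 0 = 0 := by
  unfold partMult
  refine Set.Infinite.ncard ?_
  refine Set.Infinite.mono ?_ (Set.Ici_infinite (n + 1))
  intro i hi
  simp only [Set.mem_Ici] at hi
  exact ⟨by omega, hp.2.2.1 i (by omega)⟩

lemma even_num_parts {p : ℕ → ℕ} (hp : IsPartitionFn n p)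
    (hD : ∀ k, Even k → Even (partMult p k)) (hn : Even n) :
    Even (transposeFn p 1) := by
  classical
  set F := (Finset.Icc 1 n).filter (fun i => 1 ≤ p i) with hF
  have hT1 : transposeFn p 1 = F.card := transpose_eq_filter_card hp le_rfl
  have hmaps : ∀ i ∈ F, p i ∈ Finset.Icc 1 n := by
    intro i hi
    rw [Finset.mem_filter] at hi
    exact Finset.mem_Icc.mpr ⟨hi.2, part_le_n hp i⟩
  have hcard : F.card = ∑ k ∈ Finset.Icc 1 n, ((F.filter (fun i => p i = k)).card) :=
    Finset.card_eq_sum_card_fiberwise hmaps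
  have hfib : ∀ k ∈ Finset.Icc 1 n,
      (F.filter (fun i => p i = k)).card = partMult p k := by
    intro k hk
    rw [Finset.mem_Icc] at hk
    rw [partMult_eq_card hp hk.1]
    congr 1
    ext i
    simp only [hF, Finset.mem_filter, Finset.mem_Icc]
    constructor
    · rintro ⟨⟨h1, _⟩, h3⟩; exact ⟨h1, h3⟩
    · rintro ⟨h1, h3⟩; exact ⟨⟨h1, by omega⟩, h3⟩
  have hsumF : ∑ i ∈ F, p i = n := by
    have := Finset.sum_filter_add_sum_filter_not (Finset.Icc 1 n) (fun i => 1 ≤ p i) p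
    have hz : ∑ i ∈ (Finset.Icc 1 n).filter (fun i => ¬ 1 ≤ p i), p i = 0 := by
      apply Finset.sum_eq_zero
      intro i hi
      rw [Finset.mem_filter] at hi
      omega
    rw [hz, add_zero] at this
    rw [hF, this, hp.2.2.2]
  have hsumfib : ∑ k ∈ Finset.Icc 1 n, ∑ i ∈ F.filter (fun i => p i = k), p i
      = ∑ i ∈ F, p i := Finset.sum_fiberwise_of_maps_to hmaps p
  have hinner : ∀ k ∈ Finset.Icc 1 n,
      ∑ i ∈ F.filter (fun i => p i = k), p i = k * (F.filter (fun i => p i = k)).card := by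
    intro k _
    rw [Finset.sum_congr rfl (fun i hi => (Finset.mem_filter.mp hi).2), Finset.sum_const,
      smul_eq_mul, mul_comm]
  have hterm : ∀ k ∈ Finset.Icc 1 n,
      (k * (F.filter (fun i => p i = k)).card) % 2 = ((F.filter (fun i => p i = k)).card) % 2 := by
    intro k hk
    rcases Nat.even_or_odd k with he | ho
    · have hek : Even ((F.filter (fun i => p i = k)).card) := by
        rw [hfib k hk]; exact hD k he
      rw [Nat.even_iff] at hek he
      rw [Nat.mul_mod, he, hek]
    · rw [Nat.odd_iff] at ho
      rw [Nat.mul_mod, ho, one_mul]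
      omega
  have hkey : n % 2 = (∑ k ∈ Finset.Icc 1 n, (F.filter (fun i => p i = k)).card) % 2 := by
    calc n % 2 = (∑ i ∈ F, p i) % 2 := by rw [hsumF]
      _ = (∑ k ∈ Finset.Icc 1 n, ∑ i ∈ F.filter (fun i => p i = k), p i) % 2 := by rw [hsumfib]
      _ = (∑ k ∈ Finset.Icc 1 n, k * (F.filter (fun i => p i = k)).card) % 2 := by
          rw [Finset.sum_congr rfl hinner]
      _ = (∑ k ∈ Finset.Icc 1 n, (k * (F.filter (fun i => p i = k)).card) % 2) % 2 :=
          Finset.sum_nat_mod _ _ _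
      _ = (∑ k ∈ Finset.Icc 1 n, ((F.filter (fun i => p i = k)).card) % 2) % 2 := by
          rw [Finset.sum_congr rfl hterm]
      _ = (∑ k ∈ Finset.Icc 1 n, (F.filter (fun i => p i = k)).card) % 2 :=
          (Finset.sum_nat_mod _ _ _).symm
  rw [Nat.even_iff] at hn ⊢
  rw [hT1, hcard]
  omega

end Aux3

section Aux4

lemma sum_Icc_eq_Ioc (f : ℕ → ℕ) (M : ℕ) :
    ∑ i ∈ Finset.Icc 1 M, f i = ∑ i ∈ Finset.Ioc 0 M, f i := by
  rw [← Finset.Icc_add_one_left_eq_Ioc, zero_add]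

lemma even_sum_odd_interval (T : ℕ → ℕ) (h1 : T 1 % 2 = 0)
    (hpair : ∀ s, 1 ≤ s → (T (2 * s) + T (2 * s + 1)) % 2 = 0) :
    ∀ J, 1 ≤ J → (∑ c ∈ Finset.Ioc 0 (2 * J - 1), T c) % 2 = 0 := by
  intro J
  induction J with
  | zero => omega
  | succ J ih =>
    intro _
    rcases Nat.eq_zero_or_pos J with rfl | hJ
    · have e : 2 * (0 + 1) - 1 = 0 + 1 := by omega
      rw [e, Nat.Ioc_succ_singleton, Finset.sum_singleton]
      exact h1
    · have hih := ih hJ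
      have e1 : 2 * (J + 1) - 1 = (2 * J - 1 + 1) + 1 := by omega
      rw [e1, Finset.sum_Ioc_succ_top (by omega), Finset.sum_Ioc_succ_top (by omega)]
      have e2 : 2 * J - 1 + 1 = 2 * J := by omega
      rw [e2]
      have := hpair J hJ
      omega

lemma even_sum_even_interval (T : ℕ → ℕ)
    (hpair : ∀ s, 1 ≤ s → (T (2 * s - 1) + T (2 * s)) % 2 = 0) :
    ∀ J, (∑ c ∈ Finset.Ioc 0 (2 * J), T c) % 2 = 0 := by
  intro J
  induction J with
  | zero => simp
  | succ J ih =>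
    have e1 : 2 * (J + 1) = (2 * J + 1) + 1 := by omega
    rw [e1, Finset.sum_Ioc_succ_top (by omega), Finset.sum_Ioc_succ_top (by omega)]
    have hp2 := hpair (J + 1) (by omega)
    have e2 : 2 * (J + 1) - 1 = 2 * J + 1 := by omega
    have e3 : 2 * (J + 1) = 2 * J + 1 + 1 := by omega
    rw [e2, e3] at hp2
    omega

end Aux4

/-- Performing a non-special degeneration at position `j` (replacing the parts
`σ (2j) = 2r+1` and `σ (2j+2m+1) = 2r-1` both by `2r`) on a special D-partition `σ`
yields a non-special D-partition `σ'` with the same Spaltenstein dual, i.e. `σ'`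
lies in the same special piece as `σ`. -/
theorem nonspecial_degeneration_stays_in_special_piece (N j r m : ℕ) (σ σ' : ℕ → ℕ)
    (hσ : IsSpecialDPartition (2 * N) σ) (hj : 1 ≤ j) (hr : 1 ≤ r)
    (h1 : σ (2 * j) = 2 * r + 1)
    (h2 : ∀ i, 2 * j + 1 ≤ i → i ≤ 2 * j + 2 * m → σ i = 2 * r)
    (h3 : σ (2 * j + 2 * m + 1) = 2 * r - 1)
    (hσ' : σ' = fun i => if i = 2 * j ∨ i = 2 * j + 2 * m + 1 then 2 * r else σ i) :
    IsDPartition (2 * N) σ' ∧ ¬ IsSpecialDPartition (2 * N) σ' ∧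
      spaltDual (2 * N) σ' = spaltDual (2 * N) σ := by
  obtain ⟨⟨hσp, hσDev⟩, hσsp⟩ := hσ
  have hmono := hσp.2.1
  have hKle : 2 * j + 2 * m + 1 ≤ 2 * N := index_le_n hσp (by rw [h3]; omega)
  have hlo : ∀ i, 1 ≤ i → i ≤ 2 * j → 2 * r + 1 ≤ σ i := by
    intro i hi1 hi2
    have := hmono i (2 * j) hi1 hi2
    omega
  have hhi : ∀ i, 2 * j + 2 * m + 1 ≤ i → σ i ≤ 2 * r - 1 := by
    intro i hi
    have := hmono (2 * j + 2 * m + 1) i (by omega) hi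
    omega
  have hσ'lo : ∀ i, i < 2 * j → σ' i = σ i := by
    intro i hi
    simp only [hσ']
    exact if_neg (by omega)
  have hσ'hi : ∀ i, 2 * j + 2 * m + 1 < i → σ' i = σ i := by
    intro i hi
    simp only [hσ']
    exact if_neg (by omega)
  have hσ'mid : ∀ i, 2 * j ≤ i → i ≤ 2 * j + 2 * m + 1 → σ' i = 2 * r := by
    intro i hi1 hi2
    simp only [hσ']
    by_cases he : i = 2 * j ∨ i = 2 * j + 2 * m + 1
    · exact if_pos he
    · rw [if_neg he]
      exact h2 i (by omega) (by omega)
  -- σ' is a partition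
  have hσ'p : IsPartitionFn (2 * N) σ' := by
    refine ⟨?_, ?_, ?_, ?_⟩
    · rw [hσ'lo 0 (by omega)]
      exact hσp.1
    · intro a b ha hab
      by_cases hb1 : b < 2 * j
      · rw [hσ'lo b hb1, hσ'lo a (by omega)]
        exact hmono a b ha hab
      · by_cases hb2 : b ≤ 2 * j + 2 * m + 1
        · rw [hσ'mid b (by omega) hb2]
          by_cases ha1 : a < 2 * j
          · rw [hσ'lo a ha1]
            have := hlo a ha (by omega)
            omega
          · rw [hσ'mid a (by omega) (by omega)]
        · rw [hσ'hi b (by omega)]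
          have hb3 := hhi b (by omega)
          by_cases ha1 : a < 2 * j
          · rw [hσ'lo a ha1]
            have := hlo a ha (by omega)
            omega
          · by_cases ha2 : a ≤ 2 * j + 2 * m + 1
            · rw [hσ'mid a (by omega) ha2]
              omega
            · rw [hσ'hi a (by omega)]
              exact hmono a b ha hab
    · intro i hi
      rw [hσ'hi i (by omega)]
      exact hσp.2.2.1 i hi
    · have hmem1 : 2 * j ∈ Finset.Icc 1 (2 * N) := Finset.mem_Icc.mpr ⟨by omega, by omega⟩
      have hmem2 : 2 * j + 2 * m + 1 ∈ (Finset.Icc 1 (2 * N)).erase (2 * j) :=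
        Finset.mem_erase.mpr ⟨by omega, Finset.mem_Icc.mpr ⟨by omega, hKle⟩⟩
      have hrest : ∀ f : ℕ → ℕ, ∑ i ∈ Finset.Icc 1 (2 * N), f i
          = f (2 * j) + (f (2 * j + 2 * m + 1)
            + ∑ i ∈ ((Finset.Icc 1 (2 * N)).erase (2 * j)).erase (2 * j + 2 * m + 1), f i) := by
        intro f
        rw [Finset.add_sum_erase _ f hmem2, Finset.add_sum_erase _ f hmem1]
      have hcongr : ∀ i ∈ ((Finset.Icc 1 (2 * N)).erase (2 * j)).erase (2 * j + 2 * m + 1),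
          σ' i = σ i := by
        intro i hi
        obtain ⟨hne1, hi'⟩ := Finset.mem_erase.mp hi
        obtain ⟨hne2, _⟩ := Finset.mem_erase.mp hi'
        simp only [hσ']
        exact if_neg (by omega)
      have e1 := hrest σ'
      have e2 := hrest σ
      rw [Finset.sum_congr rfl hcongr] at e1
      rw [hσ'mid (2 * j) le_rfl (by omega), hσ'mid (2 * j + 2 * m + 1) (by omega) le_rfl] at e1
      rw [h1, h3] at e2
      rw [hσp.2.2.2] at e2
      have ebridge : (((Finset.Icc 1 (2 * N)).erase (2 * j)).erase (2 * j + 2 * m + 1)).sum σ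
          = ∑ i ∈ ((Finset.Icc 1 (2 * N)).erase (2 * j)).erase (2 * j + 2 * m + 1), σ i := rfl
      omega
  -- σ' is a D-partition
  have hσ'D : IsDPartition (2 * N) σ' := by
    refine ⟨hσ'p, ?_⟩
    intro k hk
    rcases Nat.eq_zero_or_pos k with rfl | hk1
    · rw [partMult_zero hσ'p]
      exact Even.zero
    · rw [Nat.even_iff] at hk
      by_cases hk2r : k = 2 * r
      · have hset : {i : ℕ | 1 ≤ i ∧ σ' i = k} = Set.Icc (2 * j) (2 * j + 2 * m + 1) := by
          ext i
          simp only [Set.mem_setOf_eq, Set.mem_Icc]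
          constructor
          · rintro ⟨hi1, hi2⟩
            constructor
            · by_contra hc
              push_neg at hc
              rw [hσ'lo i hc] at hi2
              have := hlo i hi1 (by omega)
              omega
            · by_contra hc
              push_neg at hc
              rw [hσ'hi i hc] at hi2
              have := hhi i (by omega)
              omega
          · rintro ⟨hi1, hi2⟩
            exact ⟨by omega, by rw [hσ'mid i hi1 hi2]; omega⟩
        have : partMult σ' k = 2 * m + 2 := by
          unfold partMult
          rw [hset, ← Finset.coe_Icc, Set.ncard_coe_finset, Nat.card_Icc]
          omega
        rw [this]
        exact ⟨m + 1, by omega⟩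
      · have hset : {i : ℕ | 1 ≤ i ∧ σ' i = k} = {i : ℕ | 1 ≤ i ∧ σ i = k} := by
          ext i
          simp only [Set.mem_setOf_eq]
          constructor
          · rintro ⟨hi1, hi2⟩
            refine ⟨hi1, ?_⟩
            by_cases hpos : 2 * j ≤ i ∧ i ≤ 2 * j + 2 * m + 1
            · rw [hσ'mid i hpos.1 hpos.2] at hi2
              omega
            · have heq : σ' i = σ i := by
                rcases Nat.lt_or_ge i (2 * j) with h | h
                · exact hσ'lo i h
                · exact hσ'hi i (by omega)
              rw [← heq]
              exact hi2
          · rintro ⟨hi1, hi2⟩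
            refine ⟨hi1, ?_⟩
            by_cases hpos : 2 * j ≤ i ∧ i ≤ 2 * j + 2 * m + 1
            · exfalso
              by_cases hi2j : i = 2 * j
              · rw [hi2j, h1] at hi2
                omega
              · by_cases hiK : i = 2 * j + 2 * m + 1
                · rw [hiK, h3] at hi2
                  omega
                · rw [h2 i (by omega) (by omega)] at hi2
                  omega
            · have heq : σ' i = σ i := by
                rcases Nat.lt_or_ge i (2 * j) with h | h
                · exact hσ'lo i h
                · exact hσ'hi i (by omega)
              rw [heq]
              exact hi2
        have : partMult σ' k = partMult σ k := by
          unfold partMult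
          rw [hset]
        rw [this]
        exact hσDev k (Nat.even_iff.mpr hk)
  -- transposes are partitions
  have hτp : IsPartitionFn (2 * N) (transposeFn σ) := transpose_is_partition hσp
  have hτ'p : IsPartitionFn (2 * N) (transposeFn σ') := transpose_is_partition hσ'p
  -- parity pairing for σ from specialness
  have hpairσ : ∀ s, 1 ≤ s → (σ (2 * s - 1) + σ (2 * s)) % 2 = 0 := by
    intro s hs
    have hodd : Odd (2 * s - 1) := ⟨s - 1, by omega⟩
    have hmeq := partMult_add hτp (show 1 ≤ 2 * s - 1 by omega)
    rw [show 2 * s - 1 + 1 = 2 * s from by omega] at hmeq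
    rw [transpose_transpose hσp (show (1:ℕ) ≤ 2 * s - 1 by omega),
      transpose_transpose hσp (show (1:ℕ) ≤ 2 * s by omega)] at hmeq
    have hev := hσsp (2 * s - 1) hodd
    rw [Nat.even_iff] at hev
    omega
  -- σ' is not special
  have hnotsp : ¬ IsSpecialDPartition (2 * N) σ' := by
    intro hsp
    have hodd : Odd (2 * j - 1) := ⟨j - 1, by omega⟩
    have hev := hsp.2 (2 * j - 1) hodd
    have hmeq := partMult_add hτ'p (show 1 ≤ 2 * j - 1 by omega)
    rw [show 2 * j - 1 + 1 = 2 * j from by omega] at hmeq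
    rw [transpose_transpose hσ'p (show (1:ℕ) ≤ 2 * j - 1 by omega),
      transpose_transpose hσ'p (show (1:ℕ) ≤ 2 * j by omega)] at hmeq
    rw [hσ'mid (2 * j) le_rfl (by omega), hσ'lo (2 * j - 1) (by omega)] at hmeq
    have hp1 := hpairσ j hj
    rw [h1] at hp1
    rw [Nat.even_iff] at hev
    omega
  -- values of the transposes near 2r
  have hmid' : σ (2 * j + 1) ≤ 2 * r := by
    rcases Nat.eq_zero_or_pos m with rfl | hm
    · have : 2 * j + 2 * 0 + 1 = 2 * j + 1 := by omega
      rw [this] at h3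
      omega
    · have := h2 (2 * j + 1) (by omega) (by omega)
      omega
  have hτ2r1 : transposeFn σ (2 * r + 1) = 2 * j :=
    transpose_eq_of hσp (by omega) (fun i hi1 hi2 => hlo i hi1 hi2) (by omega)
  have hτ2r : transposeFn σ (2 * r) = 2 * j + 2 * m := by
    refine transpose_eq_of hσp (by omega) ?_ (by rw [h3]; omega)
    intro i hi1 hi2
    by_cases hle : i ≤ 2 * j
    · have := hlo i hi1 hle
      omega
    · rw [h2 i (by omega) (by omega)]
  have hτ'2r : transposeFn σ' (2 * r) = 2 * j + 2 * m + 1 := by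
    refine transpose_eq_of hσ'p (by omega) ?_ ?_
    · intro i hi1 hi2
      rcases Nat.lt_or_ge i (2 * j) with h | h
      · rw [hσ'lo i h]
        have := hlo i hi1 (by omega)
        omega
      · rw [hσ'mid i h hi2]
    · rw [hσ'hi (2 * j + 2 * m + 1 + 1) (by omega)]
      have := hhi (2 * j + 2 * m + 1 + 1) (by omega)
      omega
  have hτ'2r1 : transposeFn σ' (2 * r + 1) = 2 * j - 1 := by
    refine transpose_eq_of hσ'p (by omega) ?_ ?_
    · intro i hi1 hi2
      rw [hσ'lo i (by omega)]
      exact hlo i hi1 (by omega)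
    · rw [show 2 * j - 1 + 1 = 2 * j from by omega, hσ'mid (2 * j) le_rfl (by omega)]
      omega
  have hτ'other : ∀ k, 1 ≤ k → k ≠ 2 * r → k ≠ 2 * r + 1 →
      transposeFn σ' k = transposeFn σ k := by
    intro k hk hka hkb
    unfold transposeFn
    congr 1
    ext i
    simp only [Set.mem_setOf_eq]
    refine and_congr_right fun hi1 => ?_
    by_cases hpos : 2 * j ≤ i ∧ i ≤ 2 * j + 2 * m + 1
    · rw [hσ'mid i hpos.1 hpos.2]
      by_cases hi2j : i = 2 * j
      · rw [hi2j, h1]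
        omega
      · by_cases hiK : i = 2 * j + 2 * m + 1
        · rw [hiK, h3]
          omega
        · rw [h2 i (by omega) (by omega)]
    · have heq : σ' i = σ i := by
        rcases Nat.lt_or_ge i (2 * j) with h | h
        · exact hσ'lo i h
        · exact hσ'hi i (by omega)
      rw [heq]
  -- partial-sum comparison of the two transposes
  have hlt : ∀ M, M < 2 * r → ∑ i ∈ Finset.Icc 1 M, transposeFn σ' i
      = ∑ i ∈ Finset.Icc 1 M, transposeFn σ i := by
    intro M hM
    refine Finset.sum_congr rfl fun k hk => ?_
    rw [Finset.mem_Icc] at hk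
    exact hτ'other k hk.1 (by omega) (by omega)
  have heq2r : ∑ i ∈ Finset.Icc 1 (2 * r), transposeFn σ' i
      = (∑ i ∈ Finset.Icc 1 (2 * r), transposeFn σ i) + 1 := by
    have ha := sum_Icc_eq_Ioc (transposeFn σ') (2 * r)
    have hb := sum_Icc_eq_Ioc (transposeFn σ) (2 * r)
    rw [show 2 * r = (2 * r - 1) + 1 from by omega] at ha hb
    rw [Finset.sum_Ioc_succ_top (by omega)] at ha hb
    rw [← sum_Icc_eq_Ioc] at ha hb
    rw [show 2 * r - 1 + 1 = 2 * r from by omega] at ha hb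
    rw [ha, hb, hlt (2 * r - 1) (by omega), hτ'2r, hτ2r]
    omega
  have hgt : ∀ M, 2 * r + 1 ≤ M → ∑ i ∈ Finset.Icc 1 M, transposeFn σ' i
      = ∑ i ∈ Finset.Icc 1 M, transposeFn σ i := by
    intro M hM
    have hsplit : ∀ f : ℕ → ℕ, ∑ i ∈ Finset.Icc 1 M, f i
        = (∑ i ∈ Finset.Icc 1 (2 * r + 1), f i) + ∑ i ∈ Finset.Ioc (2 * r + 1) M, f i := by
      intro f
      rw [sum_Icc_eq_Ioc f M, sum_Icc_eq_Ioc f (2 * r + 1),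
        ← Finset.sum_Ioc_consecutive f (show (0:ℕ) ≤ 2 * r + 1 by omega) hM]
    rw [hsplit (transposeFn σ'), hsplit (transposeFn σ)]
    have htail : ∑ i ∈ Finset.Ioc (2 * r + 1) M, transposeFn σ' i
        = ∑ i ∈ Finset.Ioc (2 * r + 1) M, transposeFn σ i := by
      refine Finset.sum_congr rfl fun k hk => ?_
      rw [Finset.mem_Ioc] at hk
      exact hτ'other k (by omega) (by omega) (by omega)
    have hhead : ∑ i ∈ Finset.Icc 1 (2 * r + 1), transposeFn σ' i
        = ∑ i ∈ Finset.Icc 1 (2 * r + 1), transposeFn σ i := by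
      have ha := sum_Icc_eq_Ioc (transposeFn σ') (2 * r + 1)
      have hb := sum_Icc_eq_Ioc (transposeFn σ) (2 * r + 1)
      rw [Finset.sum_Ioc_succ_top (by omega)] at ha hb
      rw [← sum_Icc_eq_Ioc] at ha hb
      rw [ha, hb, heq2r, hτ'2r1, hτ2r1]
      omega
    rw [htail, hhead]
    -- even parity of 2N
  have h2Neven : Even (2 * N) := ⟨N, by omega⟩
  have h2rn : 2 * r ≤ 2 * N := by
    have := part_le_n hσp (2 * j)
    omega
  -- key: dominance transfer
  have hkey : ∀ ν, IsDPartition (2 * N) ν → DominatesFn (transposeFn σ') ν →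
      DominatesFn (transposeFn σ) ν := by
    intro ν hν hdom
    obtain ⟨hνp, hνD⟩ := hν
    intro M
    rcases Nat.lt_trichotomy M (2 * r) with hM | hM | hM
    · rw [← hlt M hM]
      exact hdom M
    · subst hM
      by_contra hcon
      push_neg at hcon
      have hub := hdom (2 * r)
      rw [heq2r] at hub
      have heqS : ∑ i ∈ Finset.Icc 1 (2 * r), ν i
          = (∑ i ∈ Finset.Icc 1 (2 * r), transposeFn σ i) + 1 := by omega
      -- split partial sums at 2r-1 and 2r
      have hsplitr : ∀ f : ℕ → ℕ, ∑ i ∈ Finset.Icc 1 (2 * r), f i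
          = (∑ i ∈ Finset.Icc 1 (2 * r - 1), f i) + f (2 * r) := by
        intro f
        have ha := sum_Icc_eq_Ioc f (2 * r)
        rw [show 2 * r = (2 * r - 1) + 1 from by omega] at ha
        rw [Finset.sum_Ioc_succ_top (by omega), ← sum_Icc_eq_Ioc] at ha
        rw [show 2 * r - 1 + 1 = 2 * r from by omega] at ha
        exact ha
      have hsplitr1 : ∀ f : ℕ → ℕ, ∑ i ∈ Finset.Icc 1 (2 * r + 1), f i
          = (∑ i ∈ Finset.Icc 1 (2 * r), f i) + f (2 * r + 1) := by
        intro f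
        have ha := sum_Icc_eq_Ioc f (2 * r + 1)
        rw [Finset.sum_Ioc_succ_top (by omega), ← sum_Icc_eq_Ioc] at ha
        exact ha
      have hd1 := hdom (2 * r - 1)
      rw [hlt (2 * r - 1) (by omega)] at hd1
      have hd2 := hdom (2 * r + 1)
      rw [hgt (2 * r + 1) (by omega)] at hd2
      have hsν := hsplitr ν
      have hsτ := hsplitr (transposeFn σ)
      rw [hτ2r] at hsτ
      have hν2r : 2 * j + 2 * m + 1 ≤ ν (2 * r) := by omega
      have hsν1 := hsplitr1 ν
      have hsτ1 := hsplitr1 (transposeFn σ)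
      rw [hτ2r1] at hsτ1
      have hν2r1 : ν (2 * r + 1) ≤ 2 * j - 1 := by omega
      -- transpose of ν on the relevant columns
      have hTν_ge : ∀ c, 1 ≤ c → c ≤ 2 * j + 2 * m + 1 → 2 * r ≤ transposeFn ν c := by
        intro c hc1 hc2
        exact (le_transpose_iff hνp hc1 (show (1:ℕ) ≤ 2 * r by omega)).mpr (by omega)
      have hTν_le : ∀ c, 2 * j ≤ c → transposeFn ν c ≤ 2 * r := by
        intro c hc
        by_contra hcon2
        push_neg at hcon2
        have := (le_transpose_iff hνp (show (1:ℕ) ≤ c by omega)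
          (show (1:ℕ) ≤ 2 * r + 1 by omega)).mp (by omega)
        omega
      -- min identities
      have hminν : ∑ i ∈ Finset.Icc 1 (2 * r), ν i
          = ∑ c ∈ Finset.Icc 1 (2 * N), min (transposeFn ν c) (2 * r) :=
        partial_sum_eq hνp h2rn
      have hminτ : ∑ i ∈ Finset.Icc 1 (2 * r), transposeFn σ i
          = ∑ c ∈ Finset.Icc 1 (2 * N), min (σ c) (2 * r) := by
        rw [partial_sum_eq hτp h2rn]
        exact Finset.sum_congr rfl fun c hc => by
          rw [transpose_transpose hσp (Finset.mem_Icc.mp hc).1]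
      -- three-way split of column sums
      have hsplit3 : ∀ f : ℕ → ℕ, ∑ c ∈ Finset.Icc 1 (2 * N), f c
          = (∑ c ∈ Finset.Ioc 0 (2 * j - 1), f c)
            + (∑ c ∈ Finset.Ioc (2 * j - 1) (2 * j + 2 * m + 1), f c)
            + (∑ c ∈ Finset.Ioc (2 * j + 2 * m + 1) (2 * N), f c) := by
        intro f
        rw [sum_Icc_eq_Ioc f (2 * N),
          ← Finset.sum_Ioc_consecutive f (show (0:ℕ) ≤ 2 * j + 2 * m + 1 by omega) hKle,
          ← Finset.sum_Ioc_consecutive f (show (0:ℕ) ≤ 2 * j - 1 by omega)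
            (show 2 * j - 1 ≤ 2 * j + 2 * m + 1 by omega)]
      -- pieces for ν
      have hloν : ∑ c ∈ Finset.Ioc 0 (2 * j - 1), min (transposeFn ν c) (2 * r)
          = (2 * j - 1) * (2 * r) := by
        have hv : ∀ c ∈ Finset.Ioc 0 (2 * j - 1), min (transposeFn ν c) (2 * r) = 2 * r := by
          intro c hc
          rw [Finset.mem_Ioc] at hc
          have := hTν_ge c (by omega) (by omega)
          omega
        rw [Finset.sum_congr rfl hv, Finset.sum_const, Nat.card_Ioc, smul_eq_mul,
          Nat.sub_zero]
      have hTmid : ∀ c ∈ Finset.Ioc (2 * j - 1) (2 * j + 2 * m + 1), transposeFn ν c = 2 * r := by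
        intro c hc
        rw [Finset.mem_Ioc] at hc
        have ha := hTν_ge c (by omega) hc.2
        have hb := hTν_le c (by omega)
        omega
      have hmidν : ∑ c ∈ Finset.Ioc (2 * j - 1) (2 * j + 2 * m + 1), min (transposeFn ν c) (2 * r)
          = (2 * m + 2) * (2 * r) := by
        have hv : ∀ c ∈ Finset.Ioc (2 * j - 1) (2 * j + 2 * m + 1),
            min (transposeFn ν c) (2 * r) = 2 * r := by
          intro c hc
          rw [hTmid c hc]
          omega
        rw [Finset.sum_congr rfl hv, Finset.sum_const, Nat.card_Ioc, smul_eq_mul]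
        congr 1
        omega
      have hmidνp : ∑ c ∈ Finset.Ioc (2 * j - 1) (2 * j + 2 * m + 1), transposeFn ν c
          = (2 * m + 2) * (2 * r) := by
        rw [Finset.sum_congr rfl hTmid, Finset.sum_const, Nat.card_Ioc, smul_eq_mul]
        congr 1
        omega
      have hhiν : ∑ c ∈ Finset.Ioc (2 * j + 2 * m + 1) (2 * N), min (transposeFn ν c) (2 * r)
          = ∑ c ∈ Finset.Ioc (2 * j + 2 * m + 1) (2 * N), transposeFn ν c := by
        refine Finset.sum_congr rfl fun c hc => ?_
        rw [Finset.mem_Ioc] at hc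
        have := hTν_le c (by omega)
        omega
      -- pieces for σ
      have hloσ : ∑ c ∈ Finset.Ioc 0 (2 * j - 1), min (σ c) (2 * r)
          = (2 * j - 1) * (2 * r) := by
        have hv : ∀ c ∈ Finset.Ioc 0 (2 * j - 1), min (σ c) (2 * r) = 2 * r := by
          intro c hc
          rw [Finset.mem_Ioc] at hc
          have := hlo c (by omega) (by omega)
          omega
        rw [Finset.sum_congr rfl hv, Finset.sum_const, Nat.card_Ioc, smul_eq_mul,
          Nat.sub_zero]
      have hmidsplit : ∀ f : ℕ → ℕ, ∑ c ∈ Finset.Ioc (2 * j - 1) (2 * j + 2 * m + 1), f c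
          = f (2 * j) + (∑ c ∈ Finset.Ioc (2 * j) (2 * j + 2 * m), f c)
            + f (2 * j + 2 * m + 1) := by
        intro f
        rw [show 2 * j + 2 * m + 1 = (2 * j + 2 * m) + 1 from rfl,
          Finset.sum_Ioc_succ_top (by omega),
          ← Finset.sum_Ioc_consecutive f (show 2 * j - 1 ≤ 2 * j by omega)
            (show 2 * j ≤ 2 * j + 2 * m by omega)]
        have hsing : Finset.Ioc (2 * j - 1) (2 * j) = {2 * j} := by
          ext x
          simp only [Finset.mem_Ioc, Finset.mem_singleton]
          omega
        rw [hsing, Finset.sum_singleton]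
      have hmid2σ : ∑ c ∈ Finset.Ioc (2 * j) (2 * j + 2 * m), σ c = 2 * m * (2 * r) := by
        have hv : ∀ c ∈ Finset.Ioc (2 * j) (2 * j + 2 * m), σ c = 2 * r := by
          intro c hc
          rw [Finset.mem_Ioc] at hc
          exact h2 c (by omega) (by omega)
        rw [Finset.sum_congr rfl hv, Finset.sum_const, Nat.card_Ioc, smul_eq_mul]
        congr 1
        omega
      have hmid2σmin : ∑ c ∈ Finset.Ioc (2 * j) (2 * j + 2 * m), min (σ c) (2 * r)
          = 2 * m * (2 * r) := by
        have hv : ∀ c ∈ Finset.Ioc (2 * j) (2 * j + 2 * m), min (σ c) (2 * r) = 2 * r := by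
          intro c hc
          rw [Finset.mem_Ioc] at hc
          rw [h2 c (by omega) (by omega)]
          omega
        rw [Finset.sum_congr rfl hv, Finset.sum_const, Nat.card_Ioc, smul_eq_mul]
        congr 1
        omega
      have hmidσmin := hmidsplit (fun c => min (σ c) (2 * r))
      rw [hmid2σmin] at hmidσmin
      simp only [h1, h3] at hmidσmin
      have hmidσp := hmidsplit σ
      rw [hmid2σ, h1, h3] at hmidσp
      have hhiσ : ∑ c ∈ Finset.Ioc (2 * j + 2 * m + 1) (2 * N), min (σ c) (2 * r)
          = ∑ c ∈ Finset.Ioc (2 * j + 2 * m + 1) (2 * N), σ c := by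
        refine Finset.sum_congr rfl fun c hc => ?_
        rw [Finset.mem_Ioc] at hc
        have := hhi c (by omega)
        omega
      -- totals
      have htotν : ∑ c ∈ Finset.Icc 1 (2 * N), transposeFn ν c = 2 * N :=
        (transpose_is_partition hνp).2.2.2
      have htotσ : ∑ c ∈ Finset.Icc 1 (2 * N), σ c = 2 * N := hσp.2.2.2
      have hsp3a := hsplit3 (fun c => min (transposeFn ν c) (2 * r))
      have hsp3b := hsplit3 (fun c => min (σ c) (2 * r))
      have hsp3c := hsplit3 (transposeFn ν)
      have hsp3d := hsplit3 σ
      rw [hloν, hmidν, hhiν] at hsp3a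
      rw [hloσ, hmidσmin, hhiσ] at hsp3b
      rw [hmidνp] at hsp3c
      rw [hmidσp] at hsp3d
      rw [hsp3c] at htotν
      rw [hsp3d] at htotσ
      rw [hminν, hsp3a] at heqS
      rw [hminτ, hsp3b] at heqS
      -- parity facts
      have hν1even : Even (transposeFn ν 1) := even_num_parts hνp hνD h2Neven
      have hpairν : ∀ s, 1 ≤ s → (transposeFn ν (2 * s) + transposeFn ν (2 * s + 1)) % 2 = 0 := by
        intro s hs
        have hm2 := partMult_add hνp (show (1:ℕ) ≤ 2 * s by omega)
        have he := hνD (2 * s) ⟨s, by omega⟩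
        rw [Nat.even_iff] at he
        omega
      have hAeven := even_sum_odd_interval (transposeFn ν) (Nat.even_iff.mp hν1even) hpairν j hj
      have hQeven := even_sum_even_interval σ hpairσ j
      have hQsplit : ∑ c ∈ Finset.Ioc 0 (2 * j), σ c
          = (∑ c ∈ Finset.Ioc 0 (2 * j - 1), σ c) + (2 * r + 1) := by
        have ha : 2 * j = (2 * j - 1) + 1 := by omega
        rw [ha, Finset.sum_Ioc_succ_top (by omega), show 2 * j - 1 + 1 = 2 * j from by omega, h1]
      -- final contradiction
      have hring1 : (2 * m + 2) * (2 * r) = 2 * m * (2 * r) + 4 * r := by ring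
      omega
    · rw [← hgt M (by omega)]
      exact hdom M
  -- equivalence of dominance and conclusion
  have hdomiff : ∀ ν, IsDPartition (2 * N) ν →
      (DominatesFn (transposeFn σ') ν ↔ DominatesFn (transposeFn σ) ν) := by
    intro ν hν
    constructor
    · exact hkey ν hν
    · intro hd M
      rcases Nat.lt_trichotomy M (2 * r) with hM | hM | hM
      · rw [hlt M hM]
        exact hd M
      · subst hM
        rw [heq2r]
        have := hd (2 * r)
        omega
      · rw [hgt M (by omega)]
        exact hd M
  have hEq : IsDCollapseOf (2 * N) (transposeFn σ') = IsDCollapseOf (2 * N) (transposeFn σ) := by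
    funext μ
    apply propext
    unfold IsDCollapseOf
    constructor
    · rintro ⟨hμD, hμdom, hμmax⟩
      exact ⟨hμD, (hdomiff μ hμD).mp hμdom,
        fun ν hν hd => hμmax ν hν ((hdomiff ν hν).mpr hd)⟩
    · rintro ⟨hμD, hμdom, hμmax⟩
      exact ⟨hμD, (hdomiff μ hμD).mpr hμdom,
        fun ν hν hd => hμmax ν hν ((hdomiff ν hν).mp hd)⟩
  refine ⟨hσ'D, hnotsp, ?_⟩
  unfold spaltDual Dcollapse
  rw [hEq]
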